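/- arXiv:1807.05881 — 4 statements merged into one kernel-verified Lean document; each statement's English description precedes it below -/
import Mathlib

section
/- The set E_6 = {c ∈ L_6 : ⟨k_6,c⟩ = −1 and ⟨c,c⟩ = −1} of (−1)-classes has exactly 27 elements. (This is the lattice-theoretic form of the Cayley–Salmon theorem: a smooth cubic surface contains 27 lines, whose classes are exactly the (−1)-classes.) -/
/-- The intersection form on the Neron-Severi lattice `L_r = ℤ^(r+1)` of a weak del Pezzo
surface of degree `9 - r` in a type 1 basis: `⟨v,w⟩ = v₀w₀ - v₁w₁ - ⋯ - vᵣwᵣ`. -/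
def nsForm (r : ℕ) (v w : Fin (r + 1) → ℤ) : ℤ :=
  v 0 * w 0 - ∑ i : Fin r, v i.succ * w i.succ

/-- The canonical class `k_r = -3e₀ + e₁ + ⋯ + e_r`. -/
def canK (r : ℕ) : Fin (r + 1) → ℤ := fun i => if i = 0 then -3 else 1

/-- The standard basis vector `e_j` of `L_r`. -/
def eVec (r : ℕ) (j : Fin (r + 1)) : Fin (r + 1) → ℤ := fun i => if i = j then 1 else 0

/-- The set of (-2)-classes `R_r = {c : ⟨k_r,c⟩ = 0, ⟨c,c⟩ = -2}`. -/
def Rset (r : ℕ) : Set (Fin (r + 1) → ℤ) :=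
  {c | nsForm r (canK r) c = 0 ∧ nsForm r c c = -2}

/-- The set of (-1)-classes `E_r = {c : ⟨k_r,c⟩ = -1, ⟨c,c⟩ = -1}`. -/
def Eset (r : ℕ) : Set (Fin (r + 1) → ℤ) :=
  {c | nsForm r (canK r) c = -1 ∧ nsForm r c c = -1}

/-- The set of minimal-family classes `F_r = {c : ⟨k_r,c⟩ = -2, ⟨c,c⟩ = 0}`. -/
def Fset (r : ℕ) : Set (Fin (r + 1) → ℤ) :=
  {c | nsForm r (canK r) c = -2 ∧ nsForm r c c = 0}

/-- Lower bound box vector. -/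
def loVec : Fin 7 → ℤ := fun i => if i = 0 then 0 else -1

/-- Upper bound box vector. -/
def hiVec : Fin 7 → ℤ := fun i => if i = 0 then 2 else 1

/-- The candidate finite set: the filtered box. -/
noncomputable def Sfin : Finset (Fin 7 → ℤ) :=
  (Finset.Icc loVec hiVec).filter fun c => nsForm 6 (canK 6) c = -1 ∧ nsForm 6 c c = -1

lemma sq_add_self_nonneg (b : ℤ) : 0 ≤ b ^ 2 + b := by
  rcases le_or_gt 0 b with h | h
  · nlinarith
  · have : b ≤ -1 := by omega
    nlinarith

lemma sq_sub_self_nonneg (b : ℤ) : 0 ≤ b ^ 2 - b := by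
  have := sq_add_self_nonneg (-b)
  nlinarith

lemma of_sq_add_le (b : ℤ) (h : b ^ 2 + b ≤ 0) : -1 ≤ b ∧ b ≤ 0 :=
  ⟨by nlinarith [sq_nonneg (b + 1)], by nlinarith [sq_nonneg b]⟩

lemma of_sq_sub_le (b : ℤ) (h : b ^ 2 - b ≤ 0) : 0 ≤ b ∧ b ≤ 1 :=
  ⟨by nlinarith [sq_nonneg b], by nlinarith [sq_nonneg (b - 1)]⟩

set_option maxHeartbeats 1000000 in
lemma bounds (c : Fin 7 → ℤ) (hc : c ∈ Eset 6) : loVec ≤ c ∧ c ≤ hiVec := by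
  obtain ⟨h1, h2⟩ := hc
  have s0 : Fin.succ (0 : Fin 6) = (1 : Fin 7) := rfl
  have s1 : Fin.succ (1 : Fin 6) = (2 : Fin 7) := rfl
  have s2 : Fin.succ (2 : Fin 6) = (3 : Fin 7) := rfl
  have s3 : Fin.succ (3 : Fin 6) = (4 : Fin 7) := rfl
  have s4 : Fin.succ (4 : Fin 6) = (5 : Fin 7) := rfl
  have s5 : Fin.succ (5 : Fin 6) = (6 : Fin 7) := rfl
  simp [nsForm, canK, Fin.sum_univ_six, s0, s1, s2, s3, s4, s5] at h1 h2
  set a := c 0 with ha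
  set b1 := c 1 with hb1
  set b2 := c 2 with hb2
  set b3 := c 3 with hb3
  set b4 := c 4 with hb4
  set b5 := c 5 with hb5
  set b6 := c 6 with hb6
  have h1' : b1 + b2 + b3 + b4 + b5 + b6 = 1 - 3 * a := by linarith
  have h2' : b1 ^ 2 + b2 ^ 2 + b3 ^ 2 + b4 ^ 2 + b5 ^ 2 + b6 ^ 2 = a ^ 2 + 1 := by
    nlinarith [h2]
  clear h1 h2
  have hCS : (b1 + b2 + b3 + b4 + b5 + b6) ^ 2
      ≤ 6 * (b1 ^ 2 + b2 ^ 2 + b3 ^ 2 + b4 ^ 2 + b5 ^ 2 + b6 ^ 2) := by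
    nlinarith [sq_nonneg (b1 - b2), sq_nonneg (b1 - b3), sq_nonneg (b1 - b4),
      sq_nonneg (b1 - b5), sq_nonneg (b1 - b6), sq_nonneg (b2 - b3), sq_nonneg (b2 - b4),
      sq_nonneg (b2 - b5), sq_nonneg (b2 - b6), sq_nonneg (b3 - b4), sq_nonneg (b3 - b5),
      sq_nonneg (b3 - b6), sq_nonneg (b4 - b5), sq_nonneg (b4 - b6), sq_nonneg (b5 - b6)]
  have hq : 3 * a ^ 2 - 6 * a - 5 ≤ 0 := by nlinarith
  have ha0 : 0 ≤ a := by
    by_contra h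
    push_neg at h
    have : a ≤ -1 := by omega
    nlinarith
  have ha2 : a ≤ 2 := by
    by_contra h
    push_neg at h
    have : 3 ≤ a := by omega
    nlinarith
  have k1 := sq_add_self_nonneg b1
  have k2 := sq_add_self_nonneg b2
  have k3 := sq_add_self_nonneg b3
  have k4 := sq_add_self_nonneg b4
  have k5 := sq_add_self_nonneg b5
  have k6 := sq_add_self_nonneg b6
  have m1 := sq_sub_self_nonneg b1
  have m2 := sq_sub_self_nonneg b2
  have m3 := sq_sub_self_nonneg b3
  have m4 := sq_sub_self_nonneg b4
  have m5 := sq_sub_self_nonneg b5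
  have m6 := sq_sub_self_nonneg b6
  have hbb : (-1 ≤ b1 ∧ b1 ≤ 1) ∧ (-1 ≤ b2 ∧ b2 ≤ 1) ∧ (-1 ≤ b3 ∧ b3 ≤ 1) ∧
      (-1 ≤ b4 ∧ b4 ≤ 1) ∧ (-1 ≤ b5 ∧ b5 ≤ 1) ∧ (-1 ≤ b6 ∧ b6 ≤ 1) := by
    have hcase : a = 0 ∨ a = 1 ∨ a = 2 := by omega
    rcases hcase with h | h | h
    · -- each `bᵢ² - bᵢ ≤ 0`, so each `bᵢ ∈ {0,1}`
      have h' : a ^ 2 = 0 := by rw [h]; ring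
      obtain ⟨u1, v1⟩ := of_sq_sub_le b1 (by linarith)
      obtain ⟨u2, v2⟩ := of_sq_sub_le b2 (by linarith)
      obtain ⟨u3, v3⟩ := of_sq_sub_le b3 (by linarith)
      obtain ⟨u4, v4⟩ := of_sq_sub_le b4 (by linarith)
      obtain ⟨u5, v5⟩ := of_sq_sub_le b5 (by linarith)
      obtain ⟨u6, v6⟩ := of_sq_sub_le b6 (by linarith)
      exact ⟨⟨by omega, v1⟩, ⟨by omega, v2⟩, ⟨by omega, v3⟩, ⟨by omega, v4⟩,
        ⟨by omega, v5⟩, ⟨by omega, v6⟩⟩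
    · have h' : a ^ 2 = 1 := by rw [h]; ring
      obtain ⟨u1, v1⟩ := of_sq_add_le b1 (by linarith)
      obtain ⟨u2, v2⟩ := of_sq_add_le b2 (by linarith)
      obtain ⟨u3, v3⟩ := of_sq_add_le b3 (by linarith)
      obtain ⟨u4, v4⟩ := of_sq_add_le b4 (by linarith)
      obtain ⟨u5, v5⟩ := of_sq_add_le b5 (by linarith)
      obtain ⟨u6, v6⟩ := of_sq_add_le b6 (by linarith)
      exact ⟨⟨u1, by omega⟩, ⟨u2, by omega⟩, ⟨u3, by omega⟩, ⟨u4, by omega⟩,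
        ⟨u5, by omega⟩, ⟨u6, by omega⟩⟩
    · have h' : a ^ 2 = 4 := by rw [h]; ring
      obtain ⟨u1, v1⟩ := of_sq_add_le b1 (by linarith)
      obtain ⟨u2, v2⟩ := of_sq_add_le b2 (by linarith)
      obtain ⟨u3, v3⟩ := of_sq_add_le b3 (by linarith)
      obtain ⟨u4, v4⟩ := of_sq_add_le b4 (by linarith)
      obtain ⟨u5, v5⟩ := of_sq_add_le b5 (by linarith)
      obtain ⟨u6, v6⟩ := of_sq_add_le b6 (by linarith)
      exact ⟨⟨u1, by omega⟩, ⟨u2, by omega⟩, ⟨u3, by omega⟩, ⟨u4, by omega⟩,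
        ⟨u5, by omega⟩, ⟨u6, by omega⟩⟩
  obtain ⟨⟨p1, q1⟩, ⟨p2, q2⟩, ⟨p3, q3⟩, ⟨p4, q4⟩, ⟨p5, q5⟩, ⟨p6, q6⟩⟩ := hbb
  constructor <;> intro i <;> fin_cases i <;>
    simp [loVec, hiVec] <;> omega

lemma eset_eq : Eset 6 = ↑Sfin := by
  ext c
  simp only [Sfin, Finset.coe_filter, Finset.mem_Icc, Set.mem_setOf_eq]
  constructor
  · intro hc
    exact ⟨bounds c hc, hc.1, hc.2⟩
  · rintro ⟨-, h1, h2⟩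
    exact ⟨h1, h2⟩

set_option maxRecDepth 20000 in
/-- Cayley–Salmon, lattice form: the set of (-1)-classes for r = 6 (cubic surface)
has exactly 27 elements. -/
theorem stmt_7 : (Eset 6).ncard = 27 := by
  rw [eset_eq, Set.ncard_coe_finset]
  decide
end

section
/- For every integer r with 1 ≤ r ≤ 8 and all f, g ∈ F_r = {c ∈ L_r : ⟨k_r,c⟩ = −2 and ⟨c,c⟩ = 0}, one has (9 − r)·⟨f,g⟩ ≤ 8. In particular ⟨f,g⟩ ≤ 8 for all f, g ∈ F_8, which is the lattice-theoretic reason that an edge label in the simple family graph of a real weak del Pezzo surface is at most 8. -/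
lemma nsForm_symm (r : ℕ) (v w : Fin (r+1) → ℤ) : nsForm r v w = nsForm r w v := by
  simp [nsForm, mul_comm]

lemma nsForm_lin (r : ℕ) (a b : ℤ) (x y w : Fin (r+1) → ℤ) :
    nsForm r (fun i => a * x i + b * y i) w = a * nsForm r x w + b * nsForm r y w := by
  simp only [nsForm, add_mul, Finset.sum_add_distrib, mul_assoc, ← Finset.mul_sum]
  ring

lemma nsForm_kk (r : ℕ) : nsForm r (canK r) (canK r) = 9 - r := by
  simp [nsForm, canK, Fin.succ_ne_zero]

lemma negdef (r : ℕ) (hr : r ≤ 9) (u : Fin (r+1) → ℤ)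
    (h : nsForm r (canK r) u = 0) : nsForm r u u ≤ 0 := by
  simp only [nsForm, canK, Fin.succ_ne_zero, if_true, if_false, one_mul] at h ⊢
  have cs := Finset.sum_mul_sq_le_sq_mul_sq Finset.univ (fun i : Fin r => u i.succ) (fun _ => 1)
  simp only [mul_one, one_pow, Finset.sum_const, Finset.card_univ, Fintype.card_fin,
    nsmul_eq_mul] at cs
  have hS : (0:ℤ) ≤ ∑ i : Fin r, u i.succ ^ 2 := Finset.sum_nonneg fun i _ => sq_nonneg _
  have hsum : ∑ i : Fin r, u i.succ = -3 * u 0 := by linarith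
  have h9 : (r:ℤ) ≤ 9 := by exact_mod_cast hr
  have : ∀ i : Fin r, u i.succ * u i.succ = u i.succ ^ 2 := fun i => (sq _).symm
  simp only [this]
  have key : (∑ i : Fin r, u i.succ ^ 2) * (r:ℤ) ≤ (∑ i : Fin r, u i.succ ^ 2) * 9 :=
    mul_le_mul_of_nonneg_left h9 hS
  rw [hsum] at cs
  nlinarith [cs, key]

lemma main_ineq (r : ℕ) (hr1 : 1 ≤ r) (hr8 : r ≤ 8) (f : Fin (r+1) → ℤ) (hf : f ∈ Fset r)
    (g : Fin (r+1) → ℤ) (hg : g ∈ Fset r) : ((9 : ℤ) - (r : ℤ)) * nsForm r f g ≤ 8 := by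
  obtain ⟨hkf, hff⟩ := hf
  obtain ⟨hkg, hgg⟩ := hg
  set d : ℤ := 9 - (r : ℤ) with hd
  have hd1 : 1 ≤ d := by
    have : (r:ℤ) ≤ 8 := by exact_mod_cast hr8
    omega
  set m : ℤ := nsForm r f g with hm
  have hkk : nsForm r (canK r) (canK r) = d := nsForm_kk r
  have hfk : nsForm r f (canK r) = -2 := (nsForm_symm r f (canK r)).trans hkf
  have hgk : nsForm r g (canK r) = -2 := (nsForm_symm r g (canK r)).trans hkg
  have hgf : nsForm r g f = m := (nsForm_symm r g f)
  set u : Fin (r+1) → ℤ := fun i => d * f i + 2 * canK r i with hu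
  set v : Fin (r+1) → ℤ := fun i => d * g i + 2 * canK r i with hv
  have hku : nsForm r (canK r) u = 0 := by
    rw [nsForm_symm, hu, nsForm_lin, hfk, hkk]; ring
  have hkv : nsForm r (canK r) v = 0 := by
    rw [nsForm_symm, hv, nsForm_lin, hgk, hkk]; ring
  have huu : nsForm r u u = -4 * d := by
    rw [hu, nsForm_lin, nsForm_symm r f, nsForm_lin, nsForm_symm r (canK r) u, nsForm_lin,
      hff, hkf, hfk, hkk]
    ring
  have hvv : nsForm r v v = -4 * d := by
    rw [hv, nsForm_lin, nsForm_symm r g, nsForm_lin, nsForm_symm r (canK r) v, nsForm_lin,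
      hgg, hkg, hgk, hkk]
    ring
  have hfv : nsForm r f v = d * m - 4 := by
    rw [nsForm_symm, hv, nsForm_lin, hgf, hkf]; ring
  have huv : nsForm r u v = d * d * m - 4 * d := by
    rw [hu, nsForm_lin, hfv, hkv]; ring
  set B : ℤ := d * d * m - 4 * d with hB
  set w : Fin (r+1) → ℤ := fun i => (-(4*d)) * v i + (-B) * u i with hw
  have hkw : nsForm r (canK r) w = 0 := by
    rw [nsForm_symm, hw, nsForm_lin, nsForm_symm r v, hkv, nsForm_symm r u, hku]; ring
  have hvw : nsForm r v w = 16 * d^2 - B^2 := by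
    rw [nsForm_symm r v w, hw, nsForm_lin, hvv, huv]; ring
  have huw : nsForm r u w = 0 := by
    rw [nsForm_symm r u w, hw, nsForm_lin, nsForm_symm r v u, huv, huu]; ring
  have hww : nsForm r w w = -64 * d^3 + 4 * d * B^2 := by
    rw [hw, nsForm_lin, hvw, huw]; ring
  have hneg : nsForm r w w ≤ 0 := negdef r (by omega) w hkw
  rw [hww] at hneg
  -- from 4d B² ≤ 64 d³ and d ≥ 1: B² ≤ 16 d², so (d(dm-4))² ≤ (4d)², so dm ≤ 8
  have hB2 : B^2 ≤ 16 * d^2 := by nlinarith [sq_nonneg B, hd1]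
  have hsq : (d*m - 4)^2 ≤ 16 := by
    have h1 : (d*m-4)^2 * d^2 ≤ 16 * d^2 := by
      have e : (d*m-4)^2 * d^2 = B^2 := by rw [hB]; ring
      linarith [e, hB2]
    have hdpos : (0:ℤ) < d^2 := by positivity
    exact le_of_mul_le_mul_right (by linarith) hdpos
  nlinarith [hsq]

/-- For 1 ≤ r ≤ 8 and f, g ∈ F_r one has (9-r)·⟨f,g⟩ ≤ 8; in particular ⟨f,g⟩ ≤ 8
for f, g ∈ F_8, so edge labels in simple family graphs of real weak del Pezzo surfaces
are at most 8. -/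
theorem stmt_14 :
    (∀ r : ℕ, 1 ≤ r → r ≤ 8 → ∀ f ∈ Fset r, ∀ g ∈ Fset r,
      ((9 : ℤ) - (r : ℤ)) * nsForm r f g ≤ 8) ∧
    (∀ f ∈ Fset 8, ∀ g ∈ Fset 8, nsForm 8 f g ≤ 8) := by
  refine ⟨main_ineq, fun f hf g hg => ?_⟩
  have := main_ineq 8 (by norm_num) le_rfl f hf g hg
  norm_num at this
  exact this
end

section
/- (Del Pezzo case of the paper's lemma on triples of families with mutual intersection one.) Let r be an integer with 4 ≤ r ≤ 8. If u, v, w ∈ F_r = {c ∈ L_r : ⟨k_r,c⟩ = −2 and ⟨c,c⟩ = 0} satisfy ⟨u,v⟩ = ⟨v,w⟩ = ⟨u,w⟩ = 1, then there exists a (−1)-class c ∈ E_r = {c ∈ L_r : ⟨k_r,c⟩ = −1 and ⟨c,c⟩ = −1} with ⟨u,c⟩ = ⟨v,c⟩ = ⟨w,c⟩ = 0. -/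
lemma nsForm_comm (r : ℕ) (x y : Fin (r+1) → ℤ) : nsForm r x y = nsForm r y x := by
  simp [nsForm, mul_comm]

lemma nsForm_canK (r : ℕ) (x : Fin (r+1) → ℤ) :
    nsForm r (canK r) x = -3 * x 0 - ∑ i : Fin r, x i.succ := by
  simp [nsForm, canK, Fin.succ_ne_zero]

lemma nsForm_addmul_left (r : ℕ) (x z y : Fin (r+1) → ℤ) (d : ℤ) :
    nsForm r (fun m => x m + d * z m) y = nsForm r x y + d * nsForm r z y := by
  simp only [nsForm, add_mul, Finset.sum_add_distrib]
  rw [show ∑ i : Fin r, d * z i.succ * y i.succ = d * ∑ i : Fin r, z i.succ * y i.succ by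
    rw [Finset.mul_sum]; exact Finset.sum_congr rfl fun i _ => mul_assoc ..]
  ring

lemma nsForm_add_left (r : ℕ) (x z y : Fin (r+1) → ℤ) :
    nsForm r (fun m => x m + z m) y = nsForm r x y + nsForm r z y := by
  simp [nsForm, add_mul, Finset.sum_add_distrib]; ring

lemma nsForm_addmul_right (r : ℕ) (y x z : Fin (r+1) → ℤ) (d : ℤ) :
    nsForm r y (fun m => x m + d * z m) = nsForm r y x + d * nsForm r y z := by
  rw [nsForm_comm, nsForm_addmul_left, nsForm_comm r x y, nsForm_comm r z y]

/-- Reflection in a vector α. -/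
def wref (r : ℕ) (α x : Fin (r+1) → ℤ) : Fin (r+1) → ℤ :=
  fun m => x m + nsForm r x α * α m

lemma wref_form_left (r : ℕ) (α x y : Fin (r+1) → ℤ) :
    nsForm r (wref r α x) y = nsForm r x y + nsForm r x α * nsForm r α y :=
  nsForm_addmul_left r x α y _

lemma wref_form_right (r : ℕ) (α x y : Fin (r+1) → ℤ) :
    nsForm r y (wref r α x) = nsForm r y x + nsForm r x α * nsForm r y α :=
  nsForm_addmul_right r y x α _

lemma wref_form (r : ℕ) (α x y : Fin (r+1) → ℤ) (hα : nsForm r α α = -2) :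
    nsForm r (wref r α x) (wref r α y) = nsForm r x y := by
  rw [wref_form_left, wref_form_right, wref_form_right, hα, nsForm_comm r α y]
  ring

lemma wref_invol (r : ℕ) (α x : Fin (r+1) → ℤ) (hα : nsForm r α α = -2) :
    wref r α (wref r α x) = x := by
  funext m
  show (x m + nsForm r x α * α m) + nsForm r (wref r α x) α * α m = x m
  rw [wref_form_left, hα]
  ring

/-- The root e₀ - e_{i.succ} - e_{j.succ} - e_{l.succ}. -/
def rt (r : ℕ) (i j l : Fin r) : Fin (r+1) → ℤ :=
  fun m => if m = 0 then 1 else if m = i.succ ∨ m = j.succ ∨ m = l.succ then -1 else 0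

lemma sum3 (r : ℕ) (i j l : Fin r) (hij : i ≠ j) (hil : i ≠ l) (hjl : j ≠ l)
    (g : Fin r → ℤ) :
    ∑ m : Fin r, g m * (if m = i ∨ m = j ∨ m = l then (-1:ℤ) else 0)
      = -(g i + g j + g l) := by
  have h : ∀ m : Fin r, g m * (if m = i ∨ m = j ∨ m = l then (-1:ℤ) else 0)
      = -((if m = i then g i else 0) + (if m = j then g j else 0) + (if m = l then g l else 0)) := by
    intro m
    by_cases h1 : m = i <;> by_cases h2 : m = j <;> by_cases h3 : m = l <;>
      subst_vars <;> simp_all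
  rw [Finset.sum_congr rfl fun m _ => h m]
  simp [Finset.sum_add_distrib, Finset.sum_ite_eq']

lemma rt_sq (r : ℕ) (i j l : Fin r) (hij : i ≠ j) (hil : i ≠ l) (hjl : j ≠ l) :
    nsForm r (rt r i j l) (rt r i j l) = -2 := by
  have h : ∀ m : Fin r, rt r i j l m.succ = if m = i ∨ m = j ∨ m = l then (-1:ℤ) else 0 := by
    intro m
    simp [rt, Fin.succ_ne_zero, Fin.succ_inj]
  simp only [nsForm, h]
  rw [sum3 r i j l hij hil hjl]
  simp [rt]

lemma rt_pair (r : ℕ) (i j l : Fin r) (hij : i ≠ j) (hil : i ≠ l) (hjl : j ≠ l)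
    (x : Fin (r+1) → ℤ) :
    nsForm r x (rt r i j l) = x 0 + (x i.succ + x j.succ + x l.succ) := by
  have h : ∀ m : Fin r, rt r i j l m.succ = if m = i ∨ m = j ∨ m = l then (-1:ℤ) else 0 := by
    intro m
    simp [rt, Fin.succ_ne_zero, Fin.succ_inj]
  simp only [nsForm]
  rw [Finset.sum_congr rfl fun m _ => by rw [h m]]
  rw [sum3 r i j l hij hil hjl]
  simp [rt]
  ring

lemma rt_canK (r : ℕ) (i j l : Fin r) (hij : i ≠ j) (hil : i ≠ l) (hjl : j ≠ l) :
    nsForm r (canK r) (rt r i j l) = 0 := by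
  rw [rt_pair r i j l hij hil hjl]
  simp [canK, Fin.succ_ne_zero]

lemma Fset_coord (r : ℕ) (h8 : r ≤ 8) (x : Fin (r+1) → ℤ) (hx : x ∈ Fset r) :
    (∀ b : Fin r, x b.succ ≤ 0) ∧ 1 ≤ x 0 := by
  obtain ⟨hk, hq⟩ := hx
  rw [nsForm_canK] at hk
  have hS : ∑ i : Fin r, x i.succ = 2 - 3 * x 0 := by linarith
  have hQ : ∑ i : Fin r, x i.succ * x i.succ = x 0 * x 0 := by
    simp only [nsForm] at hq; linarith
  have hcoord : ∀ b : Fin r, x b.succ ≤ 0 := by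
    intro b
    by_contra hb
    push_neg at hb
    have hb1 : 1 ≤ x b.succ := hb
    have h1 : x b.succ + ∑ m ∈ Finset.univ.erase b, x m.succ = 2 - 3 * x 0 := by
      rw [Finset.add_sum_erase _ (fun m : Fin r => x m.succ) (Finset.mem_univ b)]; exact hS
    have h2 : x b.succ * x b.succ + ∑ m ∈ Finset.univ.erase b, x m.succ * x m.succ
        = x 0 * x 0 := by
      rw [Finset.add_sum_erase _ (fun m : Fin r => x m.succ * x m.succ) (Finset.mem_univ b)]
      exact hQ
    have hcs : (∑ m ∈ Finset.univ.erase b, x m.succ) ^ 2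
        ≤ ((Finset.univ.erase b).card : ℤ) * ∑ m ∈ Finset.univ.erase b, (x m.succ) ^ 2 :=
      sq_sum_le_card_mul_sum_sq
    have hcard : (((Finset.univ.erase b) : Finset (Fin r)).card : ℤ) ≤ 7 := by
      have : ((Finset.univ.erase b) : Finset (Fin r)).card = r - 1 := by
        rw [Finset.card_erase_of_mem (Finset.mem_univ b), Finset.card_univ, Fintype.card_fin]
      rw [this]
      omega
    have hBnn : (0:ℤ) ≤ ∑ m ∈ Finset.univ.erase b, (x m.succ) ^ 2 :=
      Finset.sum_nonneg fun m _ => sq_nonneg _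
    have hsq : ∑ m ∈ Finset.univ.erase b, (x m.succ) ^ 2
        = ∑ m ∈ Finset.univ.erase b, x m.succ * x m.succ :=
      Finset.sum_congr rfl fun m _ => by ring
    have hcs7 : (∑ m ∈ Finset.univ.erase b, x m.succ) ^ 2
        ≤ 7 * ∑ m ∈ Finset.univ.erase b, x m.succ * x m.succ := by
      calc (∑ m ∈ Finset.univ.erase b, x m.succ) ^ 2
          ≤ ((Finset.univ.erase b).card : ℤ) * ∑ m ∈ Finset.univ.erase b, (x m.succ) ^ 2 := hcs
        _ ≤ 7 * ∑ m ∈ Finset.univ.erase b, (x m.succ) ^ 2 :=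
            mul_le_mul_of_nonneg_right hcard hBnn
        _ = 7 * ∑ m ∈ Finset.univ.erase b, x m.succ * x m.succ := by rw [hsq]
    have key : (2 - 3 * x 0 - x b.succ)^2 ≤ 7 * (x 0 * x 0 - x b.succ * x b.succ) := by
      have hA : ∑ m ∈ Finset.univ.erase b, x m.succ = 2 - 3 * x 0 - x b.succ := by linarith
      have hB : ∑ m ∈ Finset.univ.erase b, x m.succ * x m.succ
          = x 0 * x 0 - x b.succ * x b.succ := by linarith
      rw [hA, hB] at hcs7
      exact hcs7
    nlinarith [key, sq_nonneg (2 * x 0 + 3 * x b.succ - 6), hb1,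
      mul_nonneg (sub_nonneg.2 hb1) (by linarith : (0:ℤ) ≤ x b.succ + 1)]
  refine ⟨hcoord, ?_⟩
  have : ∑ i : Fin r, x i.succ ≤ 0 := Finset.sum_nonpos fun m _ => hcoord m
  omega

lemma Fset_sums (r : ℕ) (x : Fin (r+1) → ℤ) (hx : x ∈ Fset r) :
    (∑ i : Fin r, x i.succ) = 2 - 3 * x 0 ∧
    (∑ i : Fin r, x i.succ * x i.succ) = x 0 * x 0 := by
  obtain ⟨hk, hq⟩ := hx
  rw [nsForm_canK] at hk
  simp only [nsForm] at hq
  constructor <;> linarith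


lemma arith_core (a b c R QR t : ℤ) (h4 : 4 ≤ t) (hba : b ≤ a) (hcb : c ≤ b) (hc0 : 0 ≤ c)
    (hm : a + b + c ≤ t) (hQR : QR ≤ c * R) (hR0 : 0 ≤ R) (hQR0 : 0 ≤ QR) (hR5 : R ≤ 5 * c)
    (E1 : a + b + c + R = 3 * t - 6) (E2 : a * a + b * b + c * c + QR = t * t - 6) : False := by
  rcases le_or_gt c 0 with hc | hc
  · have hc' : c = 0 := le_antisymm hc hc0
    subst hc'
    have hR : R = 0 := by linarith
    have hQ : QR = 0 := by linarith
    omega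
  · have hc1 : 1 ≤ c := hc
    have I2 : 0 ≤ (a - c) * (b - c) := mul_nonneg (by linarith) (by linarith)
    have I3 : 0 ≤ (t - (a + b + c)) * (t + (a + b + c) - 5 * c) :=
      mul_nonneg (by linarith) (by linarith)
    have I6 : 0 ≤ c * (t - 3 * c) := mul_nonneg hc0 (by linarith)
    have e1 : 2 * c * t ≤ 6 * c * c - 6 * c + 6 := by nlinarith [I2, I3, hQR]
    have e2 : c = 1 := by nlinarith [I6, e1]
    rw [e2] at e1
    linarith

lemma descent (r : ℕ) (h4 : 4 ≤ r) (h8 : r ≤ 8) (u v w : Fin (r+1) → ℤ)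
    (hu : u ∈ Fset r) (hv : v ∈ Fset r) (hw : w ∈ Fset r)
    (huv : nsForm r u v = 1) (hvw : nsForm r v w = 1) (huw : nsForm r u w = 1)
    (ht : 4 ≤ u 0 + v 0 + w 0) :
    ∃ i j l : Fin r, i ≠ j ∧ i ≠ l ∧ j ≠ l ∧
      (u 0 + v 0 + w 0) + ((u i.succ + v i.succ + w i.succ) + (u j.succ + v j.succ + w j.succ)
        + (u l.succ + v l.succ + w l.succ)) ≤ -1 := by
  set t : ℤ := u 0 + v 0 + w 0 with hts
  set P : Fin r → ℤ := fun m => -(u m.succ + v m.succ + w m.succ) with hPs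
  have hP0 : ∀ m : Fin r, 0 ≤ P m := by
    intro m
    have h1 := (Fset_coord r h8 u hu).1 m
    have h2 := (Fset_coord r h8 v hv).1 m
    have h3 := (Fset_coord r h8 w hw).1 m
    simp only [hPs]
    linarith
  have hSP : ∑ m : Fin r, P m = 3 * t - 6 := by
    have h1 := (Fset_sums r u hu).1
    have h2 := (Fset_sums r v hv).1
    have h3 := (Fset_sums r w hw).1
    simp only [hPs, neg_add, Finset.sum_add_distrib, Finset.sum_neg_distrib]
    rw [h1, h2, h3]
    ring
  have hca : ∑ m : Fin r, u m.succ * v m.succ = u 0 * v 0 - 1 := by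
    simp only [nsForm] at huv; linarith
  have hcb : ∑ m : Fin r, u m.succ * w m.succ = u 0 * w 0 - 1 := by
    simp only [nsForm] at huw; linarith
  have hcc : ∑ m : Fin r, v m.succ * w m.succ = v 0 * w 0 - 1 := by
    simp only [nsForm] at hvw; linarith
  have hQP : ∑ m : Fin r, P m * P m = t * t - 6 := by
    have hexp : ∀ m : Fin r, P m * P m =
        u m.succ * u m.succ + v m.succ * v m.succ + w m.succ * w m.succ
        + 2 * (u m.succ * v m.succ) + 2 * (u m.succ * w m.succ)
        + 2 * (v m.succ * w m.succ) := by
      intro m; simp only [hPs]; ring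
    rw [Finset.sum_congr rfl fun m _ => hexp m]
    simp only [Finset.sum_add_distrib, ← Finset.mul_sum]
    rw [(Fset_sums r u hu).2, (Fset_sums r v hv).2, (Fset_sums r w hw).2, hca, hcb, hcc]
    ring
  -- pick the three largest values of P
  have hne1 : (Finset.univ : Finset (Fin r)).Nonempty := ⟨⟨0, by omega⟩, Finset.mem_univ _⟩
  obtain ⟨i, -, hi⟩ := Finset.exists_max_image Finset.univ P hne1
  have hne2 : ((Finset.univ : Finset (Fin r)).erase i).Nonempty := by
    rw [← Finset.card_pos, Finset.card_erase_of_mem (Finset.mem_univ i),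
      Finset.card_univ, Fintype.card_fin]
    omega
  obtain ⟨j, hjmem, hj⟩ := Finset.exists_max_image _ P hne2
  have hne3 : (((Finset.univ : Finset (Fin r)).erase i).erase j).Nonempty := by
    rw [← Finset.card_pos, Finset.card_erase_of_mem hjmem,
      Finset.card_erase_of_mem (Finset.mem_univ i), Finset.card_univ, Fintype.card_fin]
    omega
  obtain ⟨l, hlmem, hl⟩ := Finset.exists_max_image _ P hne3
  have hji : j ≠ i := (Finset.mem_erase.1 hjmem).1
  have hlj : l ≠ j := (Finset.mem_erase.1 hlmem).1
  have hli : l ≠ i := (Finset.mem_erase.1 (Finset.erase_subset _ _ hlmem)).1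
  refine ⟨i, j, l, fun h => hji h.symm, fun h => hli h.symm, fun h => hlj h.symm, ?_⟩
  have hgoal : t + (-(P i) + -(P j) + -(P l)) ≤ -1 → t + ((u i.succ + v i.succ + w i.succ)
      + (u j.succ + v j.succ + w j.succ) + (u l.succ + v l.succ + w l.succ)) ≤ -1 := by
    simp only [hPs]; intro h; linarith
  apply hgoal
  by_contra hcon
  push_neg at hcon
  have hm : P i + P j + P l ≤ t := by
    have : P i + P j + P l ≥ t + 1 → False := fun h => by omega
    omega
  -- decompose the sums
  set s3 : Finset (Fin r) := ((Finset.univ.erase i).erase j).erase l with hs3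
  have hsplit : ∀ f : Fin r → ℤ, ∑ m : Fin r, f m = f i + (f j + (f l + ∑ m ∈ s3, f m)) := by
    intro f
    rw [hs3, Finset.add_sum_erase _ f hlmem, Finset.add_sum_erase _ f hjmem,
      Finset.add_sum_erase _ f (Finset.mem_univ i)]
  have hba : P j ≤ P i := hi j (Finset.mem_univ j)
  have hcb2 : P l ≤ P j := hj l (Finset.erase_subset _ _ hlmem)
  have hrest : ∀ m ∈ s3, P m ≤ P l := fun m hm2 => hl m (Finset.erase_subset _ _ hm2)
  have hrestsq : ∑ m ∈ s3, P m * P m ≤ P l * ∑ m ∈ s3, P m := by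
    rw [Finset.mul_sum]
    refine Finset.sum_le_sum fun m hm2 => ?_
    exact mul_le_mul_of_nonneg_right (hrest m hm2) (hP0 m)
  have hcard3 : (s3.card : ℤ) ≤ 5 := by
    rw [hs3, Finset.card_erase_of_mem hlmem, Finset.card_erase_of_mem hjmem,
      Finset.card_erase_of_mem (Finset.mem_univ i), Finset.card_univ, Fintype.card_fin]
    omega
  have hrest5 : ∑ m ∈ s3, P m ≤ 5 * P l := by
    calc ∑ m ∈ s3, P m ≤ s3.card • P l := Finset.sum_le_card_nsmul s3 P (P l) hrest
      _ = (s3.card : ℤ) * P l := nsmul_eq_mul _ _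
      _ ≤ 5 * P l := mul_le_mul_of_nonneg_right hcard3 (hP0 l)
  have hrest0 : 0 ≤ ∑ m ∈ s3, P m := Finset.sum_nonneg fun m _ => hP0 m
  have hrestsq0 : 0 ≤ ∑ m ∈ s3, P m * P m := Finset.sum_nonneg fun m _ => mul_self_nonneg _
  have E1 : P i + (P j + (P l + ∑ m ∈ s3, P m)) = 3 * t - 6 := by rw [← hsplit]; exact hSP
  have E2 : P i * P i + (P j * P j + (P l * P l + ∑ m ∈ s3, P m * P m)) = t * t - 6 := by
    rw [← hsplit (fun m => P m * P m)]; exact hQP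
  exact arith_core (P i) (P j) (P l) (∑ m ∈ s3, P m) (∑ m ∈ s3, P m * P m) t ht hba hcb2
    (hP0 l) hm hrestsq hrest0 hrestsq0 hrest5 (by linarith [E1]) (by linarith [E2])

lemma deg_one (r : ℕ) (h8 : r ≤ 8) (x : Fin (r+1) → ℤ) (hx : x ∈ Fset r) (hx0 : x 0 = 1) :
    ∃ b : Fin r, x b.succ = -1 ∧ ∀ m : Fin r, m ≠ b → x m.succ = 0 := by
  have hS : ∑ i : Fin r, x i.succ = -1 := by rw [(Fset_sums r x hx).1, hx0]; ring
  have hQ : ∑ i : Fin r, x i.succ * x i.succ = 1 := by rw [(Fset_sums r x hx).2, hx0]; norm_num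
  have hcoord := (Fset_coord r h8 x hx).1
  have hex : ∃ b : Fin r, x b.succ ≠ 0 := by
    by_contra h
    push_neg at h
    have : ∑ i : Fin r, x i.succ = 0 := Finset.sum_eq_zero fun m _ => h m
    omega
  obtain ⟨b, hb⟩ := hex
  have hb1 : x b.succ ≤ -1 := by have := hcoord b; omega
  have hsplit : x b.succ * x b.succ + ∑ m ∈ Finset.univ.erase b, x m.succ * x m.succ = 1 := by
    rw [Finset.add_sum_erase _ (fun m : Fin r => x m.succ * x m.succ) (Finset.mem_univ b)]
    exact hQ
  have hbsq : 1 ≤ x b.succ * x b.succ := by nlinarith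
  have hrest0 : (0:ℤ) ≤ ∑ m ∈ Finset.univ.erase b, x m.succ * x m.succ :=
    Finset.sum_nonneg fun m _ => mul_self_nonneg _
  have hrest : ∑ m ∈ Finset.univ.erase b, x m.succ * x m.succ = 0 := by linarith
  have hzero : ∀ m ∈ Finset.univ.erase b, x m.succ * x m.succ = 0 :=
    (Finset.sum_eq_zero_iff_of_nonneg fun m _ => mul_self_nonneg _).1 hrest
  have hbv : x b.succ = -1 := by
    have hsq1 : x b.succ * x b.succ = 1 := by linarith
    have : ¬ x b.succ ≤ -2 := fun h => by nlinarith
    omega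
  exact ⟨b, hbv, fun m hm => mul_self_eq_zero.1
    (hzero m (Finset.mem_erase.2 ⟨hm, Finset.mem_univ m⟩))⟩

lemma pair_ne (r : ℕ) (x y : Fin (r+1) → ℤ) (hx0 : x 0 = 1) (hy0 : y 0 = 1)
    (hxy : nsForm r x y = 1) (bx by' : Fin r)
    (hbx : x bx.succ = -1) (hbxz : ∀ m : Fin r, m ≠ bx → x m.succ = 0)
    (hby : y by'.succ = -1) : bx ≠ by' := by
  intro h
  subst h
  have hsum : ∑ m : Fin r, x m.succ * y m.succ = 1 := by
    rw [Finset.sum_eq_single_of_mem bx (Finset.mem_univ bx)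
      (fun m _ hm => by rw [hbxz m hm]; ring)]
    rw [hbx, hby]; ring
  simp only [nsForm, hx0, hy0, hsum] at hxy
  omega

lemma base_case (r : ℕ) (h4 : 4 ≤ r) (h8 : r ≤ 8) (u v w : Fin (r+1) → ℤ)
    (hu : u ∈ Fset r) (hv : v ∈ Fset r) (hw : w ∈ Fset r)
    (huv : nsForm r u v = 1) (hvw : nsForm r v w = 1) (huw : nsForm r u w = 1)
    (ht : u 0 + v 0 + w 0 = 3) :
    ∃ c ∈ Eset r, nsForm r u c = 0 ∧ nsForm r v c = 0 ∧ nsForm r w c = 0 := by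
  have hu1 := (Fset_coord r h8 u hu).2
  have hv1 := (Fset_coord r h8 v hv).2
  have hw1 := (Fset_coord r h8 w hw).2
  have hu0 : u 0 = 1 := by omega
  have hv0 : v 0 = 1 := by omega
  have hw0 : w 0 = 1 := by omega
  obtain ⟨bu, hbu, hbuz⟩ := deg_one r h8 u hu hu0
  obtain ⟨bv, hbv, hbvz⟩ := deg_one r h8 v hv hv0
  obtain ⟨bw, hbw, hbwz⟩ := deg_one r h8 w hw hw0
  have huv' : bu ≠ bv := pair_ne r u v hu0 hv0 huv bu bv hbu hbuz hbv
  have huw' : bu ≠ bw := pair_ne r u w hu0 hw0 huw bu bw hbu hbuz hbw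
  have hvw' : bv ≠ bw := pair_ne r v w hv0 hw0 hvw bv bw hbv hbvz hbw
  have hex : ∃ m : Fin r, m ≠ bu ∧ m ≠ bv ∧ m ≠ bw := by
    by_contra h
    push_neg at h
    have hsub : (Finset.univ : Finset (Fin r)) ⊆ {bu, bv, bw} := by
      intro m _
      by_cases h1 : m = bu
      · simp [h1]
      · by_cases h2 : m = bv
        · simp [h2]
        · simp [h m h1 h2]
    have hc1 : ({bu, bv, bw} : Finset (Fin r)).card ≤ 3 := by
      refine (Finset.card_insert_le _ _).trans ?_
      have := Finset.card_insert_le bv ({bw} : Finset (Fin r))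
      simp only [Finset.card_singleton] at this ⊢
      omega
    have := Finset.card_le_card hsub
    rw [Finset.card_univ, Fintype.card_fin] at this
    omega
  obtain ⟨m, hm1, hm2, hm3⟩ := hex
  refine ⟨eVec r m.succ, ⟨?_, ?_⟩, ?_, ?_, ?_⟩
  · rw [nsForm_canK]
    simp [eVec, (Fin.succ_ne_zero m).symm, Fin.succ_inj, Finset.sum_ite_eq']
  · simp only [nsForm, eVec]
    rw [Finset.sum_congr rfl (fun i _ => show
      (if i.succ = m.succ then (1:ℤ) else 0) * (if i.succ = m.succ then (1:ℤ) else 0)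
        = if i = m then 1 else 0 by by_cases h : i = m <;> simp [h, Fin.succ_inj])]
    simp [Finset.sum_ite_eq', (Fin.succ_ne_zero m).symm]
  · simp only [nsForm, eVec, (Fin.succ_ne_zero m).symm, if_false]
    rw [Finset.sum_congr rfl (fun i _ => show
      u i.succ * (if i.succ = m.succ then (1:ℤ) else 0) = if i = m then u i.succ else 0 by
        by_cases h : i = m <;> simp [h, Fin.succ_inj])]
    simp [Finset.sum_ite_eq', hbuz m hm1]
  · simp only [nsForm, eVec, (Fin.succ_ne_zero m).symm, if_false]
    rw [Finset.sum_congr rfl (fun i _ => show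
      v i.succ * (if i.succ = m.succ then (1:ℤ) else 0) = if i = m then v i.succ else 0 by
        by_cases h : i = m <;> simp [h, Fin.succ_inj])]
    simp [Finset.sum_ite_eq', hbvz m hm2]
  · simp only [nsForm, eVec, (Fin.succ_ne_zero m).symm, if_false]
    rw [Finset.sum_congr rfl (fun i _ => show
      w i.succ * (if i.succ = m.succ then (1:ℤ) else 0) = if i = m then w i.succ else 0 by
        by_cases h : i = m <;> simp [h, Fin.succ_inj])]
    simp [Finset.sum_ite_eq', hbwz m hm3]

lemma main_ind (r : ℕ) (h4 : 4 ≤ r) (h8 : r ≤ 8) (n : ℕ) :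
    ∀ u v w : Fin (r+1) → ℤ, u ∈ Fset r → v ∈ Fset r → w ∈ Fset r →
    nsForm r u v = 1 → nsForm r v w = 1 → nsForm r u w = 1 →
    u 0 + v 0 + w 0 ≤ (n : ℤ) →
    ∃ c ∈ Eset r, nsForm r u c = 0 ∧ nsForm r v c = 0 ∧ nsForm r w c = 0 := by
  induction n with
  | zero =>
    intro u v w hu hv hw _ _ _ hn
    have h1 := (Fset_coord r h8 u hu).2
    have h2 := (Fset_coord r h8 v hv).2
    have h3 := (Fset_coord r h8 w hw).2
    norm_num at hn
    linarith
  | succ n ih =>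
    intro u v w hu hv hw huv hvw huw hn
    have h1 := (Fset_coord r h8 u hu).2
    have h2 := (Fset_coord r h8 v hv).2
    have h3 := (Fset_coord r h8 w hw).2
    rcases eq_or_lt_of_le (show (3:ℤ) ≤ u 0 + v 0 + w 0 by linarith) with h3t | h4t
    · exact base_case r h4 h8 u v w hu hv hw huv hvw huw h3t.symm
    · have ht : 4 ≤ u 0 + v 0 + w 0 := by omega
      obtain ⟨i, j, l, hij, hil, hjl, hsum⟩ :=
        descent r h4 h8 u v w hu hv hw huv hvw huw ht
      set α := rt r i j l with hα
      have hα2 : nsForm r α α = -2 := rt_sq r i j l hij hil hjl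
      have hαk : nsForm r (canK r) α = 0 := rt_canK r i j l hij hil hjl
      have hpair : ∀ x : Fin (r+1) → ℤ,
          nsForm r x α = x 0 + (x i.succ + x j.succ + x l.succ) :=
        fun x => rt_pair r i j l hij hil hjl x
      have hα0 : α 0 = 1 := by simp [hα, rt]
      have hmemF : ∀ x : Fin (r+1) → ℤ, x ∈ Fset r → wref r α x ∈ Fset r := by
        intro x hx
        refine ⟨?_, ?_⟩
        · rw [wref_form_right, hx.1, hαk]; ring
        · rw [wref_form r α x x hα2]; exact hx.2
      have hdeg : ∀ x : Fin (r+1) → ℤ, wref r α x 0 = x 0 + nsForm r x α := by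
        intro x
        show x 0 + nsForm r x α * α 0 = _
        rw [hα0]; ring
      have hdrop : wref r α u 0 + wref r α v 0 + wref r α w 0 ≤ (n : ℤ) := by
        rw [hdeg u, hdeg v, hdeg w, hpair u, hpair v, hpair w]
        push_cast at hn ⊢
        linarith
      obtain ⟨c', hc'E, hc'u, hc'v, hc'w⟩ := ih (wref r α u) (wref r α v) (wref r α w)
        (hmemF u hu) (hmemF v hv) (hmemF w hw)
        (by rw [wref_form r α u v hα2]; exact huv)
        (by rw [wref_form r α v w hα2]; exact hvw)
        (by rw [wref_form r α u w hα2]; exact huw)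
        hdrop
      refine ⟨wref r α c', ⟨?_, ?_⟩, ?_, ?_, ?_⟩
      · rw [wref_form_right, hc'E.1, hαk]; ring
      · rw [wref_form r α c' c' hα2]; exact hc'E.2
      · rw [show u = wref r α (wref r α u) from (wref_invol r α u hα2).symm,
          wref_form r α _ c' hα2]
        exact hc'u
      · rw [show v = wref r α (wref r α v) from (wref_invol r α v hα2).symm,
          wref_form r α _ c' hα2]
        exact hc'v
      · rw [show w = wref r α (wref r α w) from (wref_invol r α w hα2).symm,
          wref_form r α _ c' hα2]
        exact hc'w

/-- Del Pezzo case of the lemma on triples of families with mutual intersection one: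
for 4 ≤ r ≤ 8, if u, v, w ∈ F_r have pairwise intersection product 1, then there is a
(-1)-class orthogonal to all three. -/
theorem stmt_18 (r : ℕ) (h4 : 4 ≤ r) (h8 : r ≤ 8)
    (u v w : Fin (r + 1) → ℤ) (hu : u ∈ Fset r) (hv : v ∈ Fset r) (hw : w ∈ Fset r)
    (huv : nsForm r u v = 1) (hvw : nsForm r v w = 1) (huw : nsForm r u w = 1) :
    ∃ c ∈ Eset r, nsForm r u c = 0 ∧ nsForm r v c = 0 ∧ nsForm r w c = 0 :=
  main_ind r h4 h8 (u 0 + v 0 + w 0).toNat u v w hu hv hw huv hvw huw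
    (Int.self_le_toNat _)
end

section
/- (Classification of real structures on the Neron-Severi lattice of a degree 6 weak del Pezzo surface.) Consider L_3 with form ⟨·,·⟩ and canonical class k_3 = −3e_0 + e_1 + e_2 + e_3. Define the four ℤ-linear involutions σ_{A_0}, σ_{A_1}, σ_{A_1'}, σ_{2A_1} of L_3 by their values on (e_0,e_1,e_2,e_3): σ_{A_0} is the identity; σ_{A_1} sends (e_0,e_1,e_2,e_3) to (e_0,e_2,e_1,e_3); σ_{A_1'} sends it to (2e_0−e_1−e_2−e_3, e_0−e_2−e_3, e_0−e_1−e_3, e_0−e_1−e_2); σ_{2A_1} sends it to (2e_0−e_1−e_2−e_3, e_0−e_1−e_3, e_0−e_2−e_3, e_0−e_1−e_2). Then: (a) each of these four maps is a ℤ-linear involution of L_3 that preserves the form ⟨·,·⟩ and fixes k_3; (b) every ℤ-linear involution σ of L_3 that preserves ⟨·,·⟩ and fixes k_3 is conjugate to exactly one of these four by a ℤ-linear automorphism φ of L_3 preserving ⟨·,·⟩ with φ(k_3) = k_3; in particular no two of the four involutions are so conjugate. -/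
/-- Matrix of the identity involution σ_{A₀} on L₃ (columns are images of e₀,…,e₃). -/
def matA0 : Matrix (Fin 4) (Fin 4) ℤ := 1

/-- Matrix of σ_{A₁} : (e₀,e₁,e₂,e₃) ↦ (e₀,e₂,e₁,e₃). -/
def matA1 : Matrix (Fin 4) (Fin 4) ℤ :=
  !![1, 0, 0, 0; 0, 0, 1, 0; 0, 1, 0, 0; 0, 0, 0, 1]

/-- Matrix of σ_{A₁'} : (e₀,e₁,e₂,e₃) ↦
(2e₀-e₁-e₂-e₃, e₀-e₂-e₃, e₀-e₁-e₃, e₀-e₁-e₂). -/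
def matA1' : Matrix (Fin 4) (Fin 4) ℤ :=
  !![2, 1, 1, 1; -1, 0, -1, -1; -1, -1, 0, -1; -1, -1, -1, 0]

/-- Matrix of σ_{2A₁} : (e₀,e₁,e₂,e₃) ↦
(2e₀-e₁-e₂-e₃, e₀-e₁-e₃, e₀-e₂-e₃, e₀-e₁-e₂). -/
def mat2A1 : Matrix (Fin 4) (Fin 4) ℤ :=
  !![2, 1, 1, 1; -1, -1, 0, -1; -1, 0, -1, -1; -1, -1, -1, 0]

/-- The four ℤ-linear involutions σ_{A₀}, σ_{A₁}, σ_{A₁'}, σ_{2A₁} of L₃. -/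
def sigmas : Fin 4 → ((Fin 4 → ℤ) →ₗ[ℤ] (Fin 4 → ℤ)) :=
  ![Matrix.toLin' matA0, Matrix.toLin' matA1, Matrix.toLin' matA1', Matrix.toLin' mat2A1]

/-- A ℤ-linear involution of L₃ preserving the intersection form and fixing the
canonical class k₃ (the lattice datum of a real structure). -/
def IsRealStructure (σ : (Fin 4 → ℤ) →ₗ[ℤ] (Fin 4 → ℤ)) : Prop :=
  (∀ v, σ (σ v) = v) ∧ (∀ v w, nsForm 3 (σ v) (σ w) = nsForm 3 v w) ∧ σ (canK 3) = canK 3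


open Matrix

/-! ### Auxiliary definitions -/

def HL : List (Fin 4 → ℤ) := [![1,0,0,0], ![2,-1,-1,-1]]
def EL : List (Fin 4 → ℤ) := [![0,0,0,1], ![0,0,1,0], ![0,1,0,0], ![1,-1,-1,0], ![1,-1,0,-1], ![1,0,-1,-1]]

def Jmat : Matrix (Fin 4) (Fin 4) ℤ := !![1,0,0,0; 0,-1,0,0; 0,0,-1,0; 0,0,0,-1]

def Smat : Fin 4 → Matrix (Fin 4) (Fin 4) ℤ := ![matA0, matA1, matA1', mat2A1]

def Glist : List (Matrix (Fin 4) (Fin 4) ℤ) := [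
  !![1, 0, 0, 0; 0, 0, 0, 1; 0, 0, 1, 0; 0, 1, 0, 0],
  !![1, 0, 0, 0; 0, 0, 1, 0; 0, 0, 0, 1; 0, 1, 0, 0],
  !![1, 0, 0, 0; 0, 0, 0, 1; 0, 1, 0, 0; 0, 0, 1, 0],
  !![1, 0, 0, 0; 0, 0, 1, 0; 0, 1, 0, 0; 0, 0, 0, 1],
  !![1, 0, 0, 0; 0, 1, 0, 0; 0, 0, 0, 1; 0, 0, 1, 0],
  !![1, 0, 0, 0; 0, 1, 0, 0; 0, 0, 1, 0; 0, 0, 0, 1],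
  !![2, 1, 1, 1; -1, -1, -1, 0; -1, -1, 0, -1; -1, 0, -1, -1],
  !![2, 1, 1, 1; -1, -1, 0, -1; -1, -1, -1, 0; -1, 0, -1, -1],
  !![2, 1, 1, 1; -1, -1, -1, 0; -1, 0, -1, -1; -1, -1, 0, -1],
  !![2, 1, 1, 1; -1, -1, 0, -1; -1, 0, -1, -1; -1, -1, -1, 0],
  !![2, 1, 1, 1; -1, 0, -1, -1; -1, -1, -1, 0; -1, -1, 0, -1],
  !![2, 1, 1, 1; -1, 0, -1, -1; -1, -1, 0, -1; -1, -1, -1, 0]]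

/-! ### Decidable finite facts -/

set_option maxRecDepth 40000 in
theorem key : ∀ c0 ∈ HL, ∀ c1 ∈ EL, ∀ c2 ∈ EL, ∀ c3 ∈ EL,
    nsForm 3 c0 c1 = 0 → nsForm 3 c0 c2 = 0 → nsForm 3 c0 c3 = 0 →
    nsForm 3 c1 c2 = 0 → nsForm 3 c1 c3 = 0 → nsForm 3 c2 c3 = 0 →
    (Matrix.of fun i j => ![c0,c1,c2,c3] j i) ∈ Glist := by decide

set_option maxRecDepth 40000 in
theorem conjClass : ∀ M ∈ Glist, M * M = 1 →
    ∃ i : Fin 4, (∃ P ∈ Glist, P * M = Smat i * P) ∧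
      ∀ j : Fin 4, (∃ P ∈ Glist, P * M = Smat j * P) → j = i := by decide

set_option maxRecDepth 40000 in
theorem ginv : ∀ P ∈ Glist, ∃ Q ∈ Glist, P * Q = 1 ∧ Q * P = 1 := by decide

set_option maxRecDepth 40000 in
theorem gJ : ∀ P ∈ Glist, P.transpose * Jmat * P = Jmat := by decide

set_option maxRecDepth 40000 in
theorem gK : ∀ P ∈ Glist, P.mulVec (canK 3) = canK 3 := by decide

set_option maxRecDepth 40000 in
theorem smFacts : ∀ i : Fin 4, Smat i * Smat i = 1 ∧
    (Smat i).transpose * Jmat * Smat i = Jmat ∧ (Smat i).mulVec (canK 3) = canK 3 := by decide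

/-! ### Column classification -/

lemma nsForm_expand (v w : Fin 4 → ℤ) :
    nsForm 3 v w = v 0 * w 0 - (v 1 * w 1 + v 2 * w 2 + v 3 * w 3) := by
  simp [nsForm, Fin.sum_univ_three]

lemma mem_EL {c : Fin 4 → ℤ} (h1 : nsForm 3 (canK 3) c = -1) (h2 : nsForm 3 c c = -1) :
    c ∈ EL := by
  obtain ⟨a, b1, b2, b3, rfl⟩ : ∃ a b1 b2 b3, c = ![a, b1, b2, b3] :=
    ⟨c 0, c 1, c 2, c 3, by funext i; fin_cases i <;> rfl⟩
  rw [nsForm_expand] at h1 h2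
  simp [canK] at h1 h2
  have ha0 : 0 ≤ a := by nlinarith [sq_nonneg (b1-b2), sq_nonneg (b1-b3), sq_nonneg (b2-b3)]
  have ha1 : a ≤ 1 := by nlinarith [sq_nonneg (b1-b2), sq_nonneg (b1-b3), sq_nonneg (b2-b3)]
  have hb1l : -1 ≤ b1 := by nlinarith [sq_nonneg b2, sq_nonneg b3, sq_nonneg (b1+1)]
  have hb1u : b1 ≤ 1 := by nlinarith [sq_nonneg b2, sq_nonneg b3, sq_nonneg (b1-1)]
  have hb2l : -1 ≤ b2 := by nlinarith [sq_nonneg b1, sq_nonneg b3, sq_nonneg (b2+1)]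
  have hb2u : b2 ≤ 1 := by nlinarith [sq_nonneg b1, sq_nonneg b3, sq_nonneg (b2-1)]
  have hb3l : -1 ≤ b3 := by nlinarith [sq_nonneg b1, sq_nonneg b2, sq_nonneg (b3+1)]
  have hb3u : b3 ≤ 1 := by nlinarith [sq_nonneg b1, sq_nonneg b2, sq_nonneg (b3-1)]
  interval_cases a <;> interval_cases b1 <;> interval_cases b2 <;> interval_cases b3 <;>
    first | (exfalso; omega) | decide

lemma mem_HL {c : Fin 4 → ℤ} (h1 : nsForm 3 (canK 3) c = -3) (h2 : nsForm 3 c c = 1) :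
    c ∈ HL := by
  obtain ⟨a, b1, b2, b3, rfl⟩ : ∃ a b1 b2 b3, c = ![a, b1, b2, b3] :=
    ⟨c 0, c 1, c 2, c 3, by funext i; fin_cases i <;> rfl⟩
  rw [nsForm_expand] at h1 h2
  simp [canK] at h1 h2
  have ha0 : 1 ≤ a := by nlinarith [sq_nonneg (b1-b2), sq_nonneg (b1-b3), sq_nonneg (b2-b3)]
  have ha1 : a ≤ 2 := by nlinarith [sq_nonneg (b1-b2), sq_nonneg (b1-b3), sq_nonneg (b2-b3)]
  have hb1l : -2 ≤ b1 := by nlinarith [sq_nonneg b2, sq_nonneg b3, sq_nonneg (b1+2)]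
  have hb1u : b1 ≤ 1 := by nlinarith [sq_nonneg b2, sq_nonneg b3, sq_nonneg (b1-1)]
  have hb2l : -2 ≤ b2 := by nlinarith [sq_nonneg b1, sq_nonneg b3, sq_nonneg (b2+2)]
  have hb2u : b2 ≤ 1 := by nlinarith [sq_nonneg b1, sq_nonneg b3, sq_nonneg (b2-1)]
  have hb3l : -2 ≤ b3 := by nlinarith [sq_nonneg b1, sq_nonneg b2, sq_nonneg (b3+2)]
  have hb3u : b3 ≤ 1 := by nlinarith [sq_nonneg b1, sq_nonneg b2, sq_nonneg (b3-1)]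
  interval_cases a <;> interval_cases b1 <;> interval_cases b2 <;> interval_cases b3 <;>
    first | (exfalso; omega) | decide

/-! ### The intersection form via the matrix `Jmat` -/

lemma nsForm_eq_J (v w : Fin 4 → ℤ) : nsForm 3 v w = v ⬝ᵥ Jmat.mulVec w := by
  have hw : Jmat.mulVec w = ![w 0, -w 1, -w 2, -w 3] := by
    funext i
    fin_cases i <;>
      simp [Jmat, Matrix.mulVec, dotProduct, Fin.sum_univ_four] <;> ring
  rw [nsForm_expand, hw]
  simp [dotProduct, Fin.sum_univ_four]
  ring

lemma form_of_J {P : Matrix (Fin 4) (Fin 4) ℤ} (h : P.transpose * Jmat * P = Jmat)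
    (v w : Fin 4 → ℤ) :
    nsForm 3 (P.mulVec v) (P.mulVec w) = nsForm 3 v w := by
  rw [nsForm_eq_J, nsForm_eq_J]
  conv_rhs => rw [← h, Matrix.mul_assoc, ← Matrix.mulVec_mulVec, Matrix.dotProduct_mulVec,
    Matrix.vecMul_transpose, ← Matrix.mulVec_mulVec]

/-! ### Matrix of a form-preserving, canonical-class-fixing endomorphism lies in `Glist` -/

lemma matMem (σ : (Fin 4 → ℤ) →ₗ[ℤ] (Fin 4 → ℤ))
    (hf : ∀ v w, nsForm 3 (σ v) (σ w) = nsForm 3 v w) (hk : σ (canK 3) = canK 3) :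
    LinearMap.toMatrix' σ ∈ Glist := by
  have hk' : ∀ v, nsForm 3 (canK 3) (σ v) = nsForm 3 (canK 3) v := fun v => by
    calc nsForm 3 (canK 3) (σ v) = nsForm 3 (σ (canK 3)) (σ v) := by rw [hk]
    _ = nsForm 3 (canK 3) v := hf _ _
  have m0 : σ (eVec 3 0) ∈ HL := mem_HL (by rw [hk']; decide) (by rw [hf]; decide)
  have m1 : σ (eVec 3 1) ∈ EL := mem_EL (by rw [hk']; decide) (by rw [hf]; decide)
  have m2 : σ (eVec 3 2) ∈ EL := mem_EL (by rw [hk']; decide) (by rw [hf]; decide)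
  have m3 : σ (eVec 3 3) ∈ EL := mem_EL (by rw [hk']; decide) (by rw [hf]; decide)
  have hM : LinearMap.toMatrix' σ =
      Matrix.of fun i j => ![σ (eVec 3 0), σ (eVec 3 1), σ (eVec 3 2), σ (eVec 3 3)] j i := by
    ext i j
    rw [LinearMap.toMatrix'_apply]
    have he : ∀ j, eVec 3 j = Pi.single j 1 := fun j => by
      funext k; simp [eVec, Pi.single_apply]
    fin_cases j <;> simp [he]
  rw [hM]
  exact key _ m0 _ m1 _ m2 _ m3
    (by rw [hf]; decide) (by rw [hf]; decide) (by rw [hf]; decide)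
    (by rw [hf]; decide) (by rw [hf]; decide) (by rw [hf]; decide)

lemma sigmas_eq (i : Fin 4) : sigmas i = Matrix.toLin' (Smat i) := by
  fin_cases i <;> rfl

/-- (a) Each of σ_{A₀}, σ_{A₁}, σ_{A₁'}, σ_{2A₁} is a ℤ-linear involution of L₃
preserving the form and fixing k₃; (b) every such involution is conjugate to exactly
one of the four by a ℤ-linear automorphism of L₃ preserving the form and fixing k₃
(in particular no two of the four are so conjugate). -/
theorem stmt_19 :
    (∀ i : Fin 4, IsRealStructure (sigmas i)) ∧
    (∀ σ : (Fin 4 → ℤ) →ₗ[ℤ] (Fin 4 → ℤ), IsRealStructure σ →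
      ∃! i : Fin 4, ∃ φ : (Fin 4 → ℤ) ≃ₗ[ℤ] (Fin 4 → ℤ),
        (∀ v w, nsForm 3 (φ v) (φ w) = nsForm 3 v w) ∧
        φ (canK 3) = canK 3 ∧
        ∀ v, φ (σ v) = sigmas i (φ v)) := by
  have hreal : ∀ i : Fin 4, IsRealStructure (sigmas i) := by
    intro i
    obtain ⟨hInv, hJ, hK⟩ := smFacts i
    rw [sigmas_eq]
    refine ⟨fun v => ?_, fun v w => ?_, ?_⟩
    · rw [← Matrix.toLin'_mul_apply, hInv, Matrix.toLin'_one, LinearMap.id_apply]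
    · simpa [Matrix.toLin'_apply] using form_of_J hJ v w
    · simpa [Matrix.toLin'_apply] using hK
  refine ⟨hreal, fun σ hσ => ?_⟩
  obtain ⟨hInv, hf, hk⟩ := hσ
  set M := LinearMap.toMatrix' σ with hMdef
  have hMG : M ∈ Glist := matMem σ hf hk
  have hMM : M * M = 1 := by
    rw [hMdef, ← LinearMap.toMatrix'_comp, ← LinearMap.toMatrix'_id (R := ℤ) (n := Fin 4)]
    congr 1
    ext v i
    simp [hInv]
  have hσM : σ = Matrix.toLin' M := (Matrix.toLin'_toMatrix' σ).symm
  obtain ⟨i, ⟨P, hPG, hPM⟩, huniq⟩ := conjClass M hMG hMM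
  obtain ⟨Q, hQG, hPQ, hQP⟩ := ginv P hPG
  refine ⟨i, ⟨LinearEquiv.ofLinear (Matrix.toLin' P) (Matrix.toLin' Q) ?_ ?_, ?_, ?_, ?_⟩, ?_⟩
  · rw [← Matrix.toLin'_mul, hPQ, Matrix.toLin'_one]
  · rw [← Matrix.toLin'_mul, hQP, Matrix.toLin'_one]
  · intro v w
    simpa [Matrix.toLin'_apply] using form_of_J (gJ P hPG) v w
  · simpa [Matrix.toLin'_apply] using gK P hPG
  · intro v
    simp only [LinearEquiv.ofLinear_apply, sigmas_eq i, hσM]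
    rw [← Matrix.toLin'_mul_apply, ← Matrix.toLin'_mul_apply, hPM]
  · rintro j ⟨φ, hφf, hφk, hφc⟩
    have hφG : LinearMap.toMatrix' (φ : (Fin 4 → ℤ) →ₗ[ℤ] (Fin 4 → ℤ)) ∈ Glist :=
      matMem _ (fun v w => hφf v w) hφk
    refine huniq j ⟨_, hφG, ?_⟩
    have hcomp : (φ : (Fin 4 → ℤ) →ₗ[ℤ] (Fin 4 → ℤ)) ∘ₗ σ =
        Matrix.toLin' (Smat j) ∘ₗ (φ : (Fin 4 → ℤ) →ₗ[ℤ] (Fin 4 → ℤ)) := by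
      ext v i
      have h := hφc (Pi.single v 1)
      rw [sigmas_eq j] at h
      simp [h, Matrix.toLin'_apply]
    calc LinearMap.toMatrix' (φ : (Fin 4 → ℤ) →ₗ[ℤ] (Fin 4 → ℤ)) * M
        = LinearMap.toMatrix' ((φ : (Fin 4 → ℤ) →ₗ[ℤ] (Fin 4 → ℤ)) ∘ₗ σ) := by
          rw [LinearMap.toMatrix'_comp, hMdef]
      _ = LinearMap.toMatrix' (Matrix.toLin' (Smat j) ∘ₗ (φ : (Fin 4 → ℤ) →ₗ[ℤ] (Fin 4 → ℤ))) := by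
          rw [hcomp]
      _ = Smat j * LinearMap.toMatrix' (φ : (Fin 4 → ℤ) →ₗ[ℤ] (Fin 4 → ℤ)) := by
          rw [LinearMap.toMatrix'_comp, LinearMap.toMatrix'_toLin']
end
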